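/- Let u ∈ C(0,∞) be a weight, b a weight with 0 < B(t) = ∫₀ᵗ b < ∞ for all t > 0, and define (T_{u,b} g)(t) = sup_{t ≤ τ < ∞} (u(τ)/B(τ)) ∫₀^τ g b. Then for every h ∈ 𝔐⁺(0,∞) and every x > 0, T_{u,b}(∫_·^∞ h)(x) is equivalent (with absolute constants) to sup_{x ≤ τ < ∞} (u(τ)/B(τ)) ∫₀^τ h(y)B(y) dy + sup_{x ≤ τ < ∞} u(τ) ∫_τ^∞ h(s) ds. -/

import Mathlib

open MeasureTheory Set
open scoped ENNReal

lemma fubini_step (b h : ℝ → ℝ≥0∞) (hb : Measurable b) (hh : Measurable h)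
    (τ : ℝ) (hτ : 0 < τ) :
    (∫⁻ s in Ioc 0 τ, (∫⁻ y in Ioi s, h y) * b s)
      = (∫⁻ y in Ioc 0 τ, h y * ∫⁻ s in Ioc 0 y, b s)
        + (∫⁻ y in Ioc 0 τ, b y) * ∫⁻ s in Ioi τ, h s := by
  have hmeas : Measurable (Function.uncurry fun s y => (Ioi s).indicator h y * b s) := by
    have : (Function.uncurry fun s y => (Ioi s).indicator h y * b s)
        = fun p : ℝ × ℝ => ({q : ℝ × ℝ | q.1 < q.2}.indicator (fun q => h q.2) p) * b p.1 := by
      ext p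
      simp [Function.uncurry, Set.indicator, Set.mem_Ioi]
    rw [this]
    exact ((hh.comp measurable_snd).indicator (measurableSet_lt measurable_fst measurable_snd)).mul
      (hb.comp measurable_fst)
  have swap := lintegral_lintegral_swap (μ := volume.restrict (Ioc 0 τ)) (ν := volume)
    (f := fun s y => (Ioi s).indicator h y * b s) hmeas.aemeasurable
  have hw : ∀ y : ℝ, (∫⁻ s in Ioc 0 τ, (Ioi s).indicator h y * b s)
      = h y * ∫⁻ s in Iio y ∩ Ioc 0 τ, b s := fun y => by
    calc (∫⁻ s in Ioc 0 τ, (Ioi s).indicator h y * b s)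
        = ∫⁻ s in Ioc 0 τ, h y * (Iio y).indicator b s := by
          refine lintegral_congr fun s => ?_
          by_cases hs : s < y <;> simp [Set.indicator, Set.mem_Ioi, Set.mem_Iio, hs]
      _ = h y * ∫⁻ s in Ioc 0 τ, (Iio y).indicator b s :=
          lintegral_const_mul (h y) (hb.indicator measurableSet_Iio)
      _ = h y * ∫⁻ s in Iio y ∩ Ioc 0 τ, b s := by
          rw [lintegral_indicator measurableSet_Iio,
            Measure.restrict_restrict measurableSet_Iio]
  calc (∫⁻ s in Ioc 0 τ, (∫⁻ y in Ioi s, h y) * b s)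
      = ∫⁻ s in Ioc 0 τ, ∫⁻ y, (Ioi s).indicator h y * b s := by
        refine lintegral_congr fun s => ?_
        rw [lintegral_mul_const _ (hh.indicator measurableSet_Ioi),
          lintegral_indicator measurableSet_Ioi]
    _ = ∫⁻ y, ∫⁻ s in Ioc 0 τ, (Ioi s).indicator h y * b s := swap
    _ = ∫⁻ y, h y * ∫⁻ s in Iio y ∩ Ioc 0 τ, b s := lintegral_congr hw
    _ = (∫⁻ y in Iic τ, h y * ∫⁻ s in Iio y ∩ Ioc 0 τ, b s)
        + ∫⁻ y in Ioi τ, h y * ∫⁻ s in Iio y ∩ Ioc 0 τ, b s := by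
        rw [← lintegral_add_compl _ measurableSet_Iic, compl_Iic]
    _ = (∫⁻ y in Ioc 0 τ, h y * ∫⁻ s in Ioc 0 y, b s)
        + (∫⁻ y in Ioc 0 τ, b y) * ∫⁻ s in Ioi τ, h s := by
        congr 1
        · have hsplit : Iic τ = Iic 0 ∪ Ioc 0 τ := (Iic_union_Ioc_eq_Iic hτ.le).symm
          rw [hsplit, lintegral_union measurableSet_Ioc
            (Iic_disjoint_Ioc le_rfl)]
          have h1 : (∫⁻ y in Iic (0:ℝ), h y * ∫⁻ s in Iio y ∩ Ioc 0 τ, b s)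
              = ∫⁻ _ in Iic (0:ℝ), (0:ℝ≥0∞) := by
            refine setLIntegral_congr_fun_ae measurableSet_Iic (ae_of_all _ fun y hy => ?_)
            have : Iio y ∩ Ioc 0 τ = ∅ := by
              ext s; simp only [mem_inter_iff, mem_Iio, mem_Ioc, mem_empty_iff_false, iff_false]
              rintro ⟨h1, h2, _⟩
              exact absurd (h2.trans h1) (not_lt.2 hy)
            simp [this]
          rw [h1, lintegral_zero, zero_add]
          refine setLIntegral_congr_fun_ae measurableSet_Ioc (ae_of_all _ fun y hy => ?_)
          have : Iio y ∩ Ioc 0 τ = Ioo 0 y := by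
            ext s; constructor
            · rintro ⟨h1, h2, _⟩; exact ⟨h2, h1⟩
            · rintro ⟨h1, h2⟩; exact ⟨h2, h1, (le_of_lt h2).trans hy.2⟩
          rw [this, restrict_Ioo_eq_restrict_Ioc]
        · have : ∀ y ∈ Ioi τ, h y * (∫⁻ s in Iio y ∩ Ioc 0 τ, b s)
              = h y * ∫⁻ s in Ioc 0 τ, b s := fun y hy => by
            have : Iio y ∩ Ioc 0 τ = Ioc 0 τ := by
              refine inter_eq_right.2 fun s hs => ?_
              exact lt_of_le_of_lt hs.2 hy
            rw [this]
          rw [setLIntegral_congr_fun_ae measurableSet_Ioi (ae_of_all _ this),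
            lintegral_mul_const _ hh, mul_comm]

lemma pointwise_eq (u b h : ℝ → ℝ≥0∞) (hb : Measurable b) (hh : Measurable h)
    (τ : ℝ) (hτ : 0 < τ) (hB0 : (∫⁻ y in Ioc 0 τ, b y) ≠ 0)
    (hBt : (∫⁻ y in Ioc 0 τ, b y) ≠ ⊤) :
    u τ / (∫⁻ y in Ioc 0 τ, b y) * ∫⁻ s in Ioc 0 τ, (∫⁻ y in Ioi s, h y) * b s
      = u τ / (∫⁻ y in Ioc 0 τ, b y) * (∫⁻ y in Ioc 0 τ, h y * ∫⁻ s in Ioc 0 y, b s)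
        + u τ * ∫⁻ s in Ioi τ, h s := by
  rw [fubini_step b h hb hh τ hτ, mul_add, ← mul_assoc,
    ENNReal.div_mul_cancel hB0 hBt]

theorem stmt_3 :
    ∃ C₁ C₂ : ℝ≥0∞, 0 < C₁ ∧ C₁ < ⊤ ∧ 0 < C₂ ∧ C₂ < ⊤ ∧
      ∀ u b h : ℝ → ℝ≥0∞, Measurable u → Measurable b → Measurable h →
        ContinuousOn u (Ioi (0 : ℝ)) →
        (∀ t : ℝ, 0 < t →
          0 < (∫⁻ y in Ioc 0 t, b y) ∧ (∫⁻ y in Ioc 0 t, b y) < ⊤) →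
        ∀ x : ℝ, 0 < x →
          (essSup (fun τ => u τ / (∫⁻ y in Ioc 0 τ, b y)
              * ∫⁻ s in Ioc 0 τ, (∫⁻ y in Ioi s, h y) * b s)
              (volume.restrict (Ici x))
            ≤ C₁ * (essSup (fun τ => u τ / (∫⁻ y in Ioc 0 τ, b y)
                  * ∫⁻ y in Ioc 0 τ, h y * ∫⁻ s in Ioc 0 y, b s)
                  (volume.restrict (Ici x))
                + essSup (fun τ => u τ * ∫⁻ s in Ioi τ, h s)
                  (volume.restrict (Ici x))))
          ∧
          (essSup (fun τ => u τ / (∫⁻ y in Ioc 0 τ, b y)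
                * ∫⁻ y in Ioc 0 τ, h y * ∫⁻ s in Ioc 0 y, b s)
                (volume.restrict (Ici x))
              + essSup (fun τ => u τ * ∫⁻ s in Ioi τ, h s)
                (volume.restrict (Ici x))
            ≤ C₂ * essSup (fun τ => u τ / (∫⁻ y in Ioc 0 τ, b y)
                * ∫⁻ s in Ioc 0 τ, (∫⁻ y in Ioi s, h y) * b s)
                (volume.restrict (Ici x))) := by
  refine ⟨1, 2, zero_lt_one, ENNReal.one_lt_top, by norm_num, by norm_num,
    fun u b h hu hb hh _ hBpos x hx => ?_⟩
  set μ := volume.restrict (Ici x)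
  set f : ℝ → ℝ≥0∞ := fun τ => u τ / (∫⁻ y in Ioc 0 τ, b y)
      * ∫⁻ y in Ioc 0 τ, h y * ∫⁻ s in Ioc 0 y, b s with hf
  set g : ℝ → ℝ≥0∞ := fun τ => u τ * ∫⁻ s in Ioi τ, h s with hg
  have heq : (fun τ => u τ / (∫⁻ y in Ioc 0 τ, b y)
      * ∫⁻ s in Ioc 0 τ, (∫⁻ y in Ioi s, h y) * b s) =ᵐ[μ] f + g := by
    filter_upwards [self_mem_ae_restrict measurableSet_Ici] with τ hτ
    have hτ0 : 0 < τ := lt_of_lt_of_le hx hτ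
    exact pointwise_eq u b h hb hh τ hτ0 (hBpos τ hτ0).1.ne' (hBpos τ hτ0).2.ne
  rw [essSup_congr_ae heq]
  constructor
  · rw [one_mul]
    exact ENNReal.essSup_add_le f g
  · have h1 : essSup f μ ≤ essSup (f + g) μ :=
      essSup_mono_ae (ae_of_all _ fun τ => le_self_add)
    have h2 : essSup g μ ≤ essSup (f + g) μ :=
      essSup_mono_ae (ae_of_all _ fun τ => le_add_self)
    calc essSup f μ + essSup g μ ≤ essSup (f + g) μ + essSup (f + g) μ := add_le_add h1 h2
      _ = 2 * essSup (f + g) μ := (two_mul _).symm
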